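/- Let n > 1 and let A be a pair-set in Q_n. Suppose B is an i-completion of A for some coordinate i ∈ [n], i.e. B is a pair-set with B ⇒* A such that every pair {α,β} ∈ B satisfies α(i) = β(i). If ρ_{i=0}(B) and ρ_{i=1}(B) are connectable pair-sets in Q_{n-1}, then A is connectable. -/

import Mathlib

open SimpleGraph Finset

attribute [local instance 10] Classical.propDecidable

/-- Vertices of the `n`-dimensional hypercube: 0-1 vectors of length `n`. -/
abbrev Vtx (n : ℕ) : Type := Fin n → Bool

/-- The hypercube graph `Q_n`: two vectors are adjacent iff they differ in
exactly one coordinate, i.e. their Hamming distance is `1`. -/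
def cube (n : ℕ) : SimpleGraph (Vtx n) where
  Adj α β := hammingDist α β = 1
  symm := ⟨fun α β (h : hammingDist α β = 1) =>
    show hammingDist β α = 1 by rwa [hammingDist_comm]⟩
  loopless := ⟨fun α (h : hammingDist α α = 1) => by
    simp [hammingDist_self] at h⟩

/-- The parity `χ(α) = (-1)^(sum of coordinates of α)`. -/
def chi {n : ℕ} (α : Vtx n) : ℤ := ∏ i, if α i then (-1 : ℤ) else 1

/-- `χ(α) + χ(β)` for an unordered pair `{α, β}`. -/
def pairChi {n : ℕ} : Sym2 (Vtx n) → ℤ :=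
  Sym2.lift ⟨fun α β => chi α + chi β, fun _ _ => add_comm _ _⟩

/-- `∪A` : the set of all vertices occurring in pairs of `A`. -/
def suppA {n : ℕ} (A : Finset (Sym2 (Vtx n))) : Set (Vtx n) :=
  {v | ∃ p ∈ A, v ∈ p}

/-- A pair-set: distinct pairs are disjoint (as vertex sets), and a nonempty
pair-set contains a non-degenerated pair. -/
def IsPairSet {n : ℕ} (A : Finset (Sym2 (Vtx n))) : Prop :=
  (∀ p ∈ A, ∀ q ∈ A, p ≠ q → ∀ v : Vtx n, v ∈ p → v ∉ q) ∧
  (A.Nonempty → ∃ p ∈ A, ¬ p.IsDiag)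

/-- An odd pair: its two vertices have different parities. -/
def OddPair {n : ℕ} (p : Sym2 (Vtx n)) : Prop :=
  ∃ α β : Vtx n, p = s(α, β) ∧ chi α ≠ chi β

/-- An odd pair-set: every pair is odd. -/
def OddPairSet {n : ℕ} (A : Finset (Sym2 (Vtx n))) : Prop :=
  ∀ p ∈ A, OddPair p

/-- A balanced pair-set: the parities sum up to `0`. -/
def BalancedPS {n : ℕ} (A : Finset (Sym2 (Vtx n))) : Prop :=
  ∑ p ∈ A, pairChi p = 0

/-- An edge-pair: its two vertices differ in exactly one coordinate. -/
def IsEdgePair {n : ℕ} (p : Sym2 (Vtx n)) : Prop :=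
  ∃ α β : Vtx n, p = s(α, β) ∧ hammingDist α β = 1

/-- `enco X` : vertices all of whose neighbours lie in `X`. -/
def enco {n : ℕ} (X : Set (Vtx n)) : Set (Vtx n) :=
  {γ | ∀ δ : Vtx n, (cube n).Adj γ δ → δ ∈ X}

/-- `enc X = enco X \ X` for a vertex set `X`. -/
def encSet {n : ℕ} (X : Set (Vtx n)) : Set (Vtx n) := enco X \ X

/-- `enc A = enco (∪A) \ ∪A` for a pair-set `A`. -/
def encA {n : ℕ} (A : Finset (Sym2 (Vtx n))) : Set (Vtx n) :=
  enco (suppA A) \ suppA A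

/-- A pair-set `A` is connectable if there is a family of paths in `Q_n`, one
path joining the two vertices of each pair of `A`, such that every vertex of
`Q_n` lies on exactly one of these paths. -/
def Connectable {n : ℕ} (A : Finset (Sym2 (Vtx n))) : Prop :=
  ∃ (src tgt : Sym2 (Vtx n) → Vtx n)
    (path : (p : Sym2 (Vtx n)) → (cube n).Walk (src p) (tgt p)),
    (∀ p ∈ A, p = s(src p, tgt p)) ∧
    (∀ p ∈ A, (path p).IsPath) ∧
    (∀ v : Vtx n, ∃! p : Sym2 (Vtx n), p ∈ A ∧ v ∈ (path p).support)

/-- `A` contains at least two edge-pairs. -/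
def TwoEdgePairs {n : ℕ} (A : Finset (Sym2 (Vtx n))) : Prop :=
  ∃ p ∈ A, ∃ q ∈ A, p ≠ q ∧ IsEdgePair p ∧ IsEdgePair q

/-- A diminishable pair-set. -/
def Diminishable {n : ℕ} (A : Finset (Sym2 (Vtx n))) : Prop :=
  IsPairSet A ∧ OddPairSet A ∧
  ((A.card ≤ n - 1 ∧
      (n = 4 →
        (∃ p ∈ A, IsEdgePair p) ∨
          ¬∃ X : Set (Vtx n), suppA A ⊆ X ∧
            Nonempty ((cube n).induce X ≃g cube 3))) ∨
    (A.card = n ∧ n ≠ 4 ∧ TwoEdgePairs A ∧ encA A = ∅))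

/-- The coordinate `i` is separating for `A`. -/
def Separating {n : ℕ} (i : Fin n) (A : Finset (Sym2 (Vtx n))) : Prop :=
  ∃ α β α' β' : Vtx n, s(α, β) ∈ A ∧ s(α', β') ∈ A ∧
    hammingDist α β = 1 ∧ hammingDist α' β' = 1 ∧
    α i = β i ∧ α' i = β' i ∧ α i ≠ α' i

/-- The relation `A ⇒ B`. -/
def StepRel {n : ℕ} (A B : Finset (Sym2 (Vtx n))) : Prop :=
  ∃ (α β α' β' : Vtx n) (i : Fin n),
    s(α, β) ∈ A ∧ s(α', β') ∈ A ∧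
    β' = Function.update β i (!(β i)) ∧
    B = A \ {s(α, β), s(α', β')} ∪ {s(α, α')}

/-- Isomorphism of pair-sets, induced by an automorphism of the hypercube. -/
def Isomorphic {n : ℕ} (A B : Finset (Sym2 (Vtx n))) : Prop :=
  ∃ f : cube n ≃g cube n, B = A.image (Sym2.map f)

/-- `ρ_{i=k}` applied to a pair-set: keep the pairs with both `i`-th
coordinates equal to `k` and delete the `i`-th coordinate. -/
def rhoPairs {m : ℕ} (i : Fin (m + 1)) (k : Bool) (B : Finset (Sym2 (Vtx (m + 1)))) :
    Finset (Sym2 (Vtx m)) :=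
  (B.filter fun p => ∀ v ∈ p, v i = k).image (Sym2.map (Fin.removeNth i))

/-- `ρ_{i=k}` applied to a vertex set. -/
def rhoSet {m : ℕ} (i : Fin (m + 1)) (k : Bool) (X : Set (Vtx (m + 1))) : Set (Vtx m) :=
  {γ | ∃ α ∈ X, α i = k ∧ γ = Fin.removeNth i α}

/-- `ι_{i,k}(A, B)`. -/
def iotaPairs {m : ℕ} (i : Fin (m + 1)) (k : Bool) (A B : Finset (Sym2 (Vtx m))) :
    Finset (Sym2 (Vtx (m + 1))) :=
  A.image (Sym2.map (i.insertNth k)) ∪ B.image (Sym2.map (i.insertNth (!k)))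


/-! ### Auxiliary machinery -/

lemma hammingDist_update {m : ℕ} (β : Vtx m) (i : Fin m) :
    hammingDist β (Function.update β i (!(β i))) = 1 := by
  unfold hammingDist
  convert Finset.card_singleton i using 2
  ext j
  rcases eq_or_ne j i with rfl | hj
  · simp
  · simp [Function.update_of_ne hj, hj]

lemma hammingDist_insertNth {m : ℕ} (i : Fin (m + 1)) (b : Bool) (u v : Vtx m) :
    hammingDist (i.insertNth b u : Vtx (m + 1)) (i.insertNth b v) = hammingDist u v := by
  unfold hammingDist
  conv_rhs => rw [← Finset.card_map i.succAboveEmb]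
  congr 1
  ext j
  simp only [Finset.mem_map, Finset.mem_filter, Finset.mem_univ, true_and,
    Fin.succAboveEmb, Function.Embedding.coeFn_mk]
  constructor
  · intro hj
    have hji : j ≠ i := by
      rintro rfl
      simp [Fin.insertNth_apply_same] at hj
    obtain ⟨k, rfl⟩ := Fin.exists_succAbove_eq hji
    refine ⟨k, ?_, rfl⟩
    simpa [Fin.insertNth_apply_succAbove] using hj
  · rintro ⟨k, hk, rfl⟩
    simpa [Fin.insertNth_apply_succAbove] using hk

/-- Inclusion of `Q_m` into `Q_{m+1}` as the slice with `i`-th coordinate `b`. -/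
def insHom {m : ℕ} (i : Fin (m + 1)) (b : Bool) : cube m →g cube (m + 1) where
  toFun := fun u => i.insertNth b u
  map_rel' := by
    intro u v h
    show hammingDist (i.insertNth b u : Vtx (m + 1)) (i.insertNth b v) = 1
    rw [hammingDist_insertNth]
    exact h

lemma insHom_injective {m : ℕ} (i : Fin (m + 1)) (b : Bool) :
    Function.Injective (insHom i b) := by
  intro u v h
  have h1 : (i.insertNth b u : Vtx (m + 1)) = i.insertNth b v := h
  have h2 := congrArg (Fin.removeNth i) h1
  rwa [Fin.removeNth_insertNth, Fin.removeNth_insertNth] at h2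

/-- `insertNth` specialised to hypercube vertices. -/
def insFun {m : ℕ} (i : Fin (m + 1)) (b : Bool) : Vtx m → Vtx (m + 1) :=
  fun u => i.insertNth b u

/-- A dependent choice over `Bool`. -/
def pick {γ : Bool → Sort*} (f : γ false) (t : γ true) : ∀ b, γ b
  | false => f
  | true => t

/-- Update a family of walks at one index. -/
noncomputable def famUpd {V : Type*} {G : SimpleGraph V} (s t : Sym2 V → V)
    (P : ∀ r : Sym2 V, G.Walk (s r) (t r)) (r0 : Sym2 V) (a b : V) (w : G.Walk a b)
    (r : Sym2 V) : (x : V) ×' (y : V) ×' G.Walk x y :=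
  if h : r = r0 then ⟨a, b, w⟩ else ⟨s r, t r, P r⟩

lemma famUpd_pos {V : Type*} {G : SimpleGraph V} (s t : Sym2 V → V)
    (P : ∀ r : Sym2 V, G.Walk (s r) (t r)) (r0 : Sym2 V) (a b : V) (w : G.Walk a b)
    {r : Sym2 V} (h : r = r0) : famUpd s t P r0 a b w r = ⟨a, b, w⟩ :=
  dif_pos h

lemma famUpd_neg {V : Type*} {G : SimpleGraph V} (s t : Sym2 V → V)
    (P : ∀ r : Sym2 V, G.Walk (s r) (t r)) (r0 : Sym2 V) (a b : V) (w : G.Walk a b)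
    {r : Sym2 V} (h : r ≠ r0) : famUpd s t P r0 a b w r = ⟨s r, t r, P r⟩ :=
  dif_neg h

lemma insHom_apply_same {m : ℕ} (i : Fin (m + 1)) (b : Bool) (u : Vtx m) :
    (insHom i b) u i = b := by
  show (i.insertNth b u : Vtx (m + 1)) i = b
  exact Fin.insertNth_apply_same i _ _

lemma removeNth_insHom {m : ℕ} (i : Fin (m + 1)) (b : Bool) (u : Vtx m) :
    Fin.removeNth i ((insHom i b) u) = u := by
  show Fin.removeNth i (i.insertNth b u : Vtx (m + 1)) = u
  exact Fin.removeNth_insertNth i _ _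

lemma walk_orient {V : Type*} {G : SimpleGraph V} {a b c d : V} (h : s(a, b) = s(c, d))
    (w : G.Walk c d) :
    ∃ w' : G.Walk a b, (w.IsPath → w'.IsPath) ∧ ∀ x, x ∈ w'.support ↔ x ∈ w.support := by
  rw [Sym2.eq_iff] at h
  rcases h with ⟨rfl, rfl⟩ | ⟨rfl, rfl⟩
  · exact ⟨w, id, fun x => Iff.rfl⟩
  · exact ⟨w.reverse, fun h => h.reverse, fun x => by simp⟩

lemma connectable_step {n : ℕ} {C D : Finset (Sym2 (Vtx n))} (h : StepRel C D)
    (hC : Connectable C) : Connectable D := by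
  obtain ⟨α, β, α', β', i, hpC, hqC, hβ', hD⟩ := h
  obtain ⟨s, t, P, hst, hpath, huniq⟩ := hC
  have hβne : β ≠ β' := by
    intro hb
    have : β i = β' i := by rw [hb]
    rw [hβ', Function.update_self] at this
    cases β i <;> simp at this
  by_cases hpq : s(α, β) = s(α', β')
  · -- degenerate case : the two pairs coincide, so `D = C`
    rcases Sym2.eq_iff.1 hpq with ⟨rfl, rfl⟩ | ⟨h1, h2⟩
    · exact absurd rfl hβne
    · have hpp : s(α', β') = s(α, β) := hpq.symm
      have haa : s(α, α') = s(α, β) := by rw [← h2]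
      have hDC : D = C := by
        rw [hD, hpp, haa,
          show ({s(α, β), s(α, β)} : Finset (Sym2 (Vtx n))) = {s(α, β)} from
            Finset.insert_eq_self.2 (Finset.mem_singleton_self _),
          Finset.sdiff_union_self_eq_union,
          Finset.union_eq_left.2 (Finset.singleton_subset_iff.2 hpC)]
      rw [hDC]
      exact ⟨s, t, P, hst, hpath, huniq⟩
  · -- main case : merge the two paths
    have endp : ∀ r ∈ C, ∀ x, x ∈ r → x ∈ (P r).support := by
      intro r hr x hx
      rw [hst r hr] at hx
      rcases Sym2.mem_iff.1 hx with rfl | rfl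
      · exact SimpleGraph.Walk.start_mem_support _
      · exact SimpleGraph.Walk.end_mem_support _
    have disj : ∀ x, x ∈ (P s(α, β)).support → x ∈ (P s(α', β')).support → False := by
      intro x h1 h2
      exact hpq ((huniq x).unique ⟨hpC, h1⟩ ⟨hqC, h2⟩)
    obtain ⟨w1, hw1p, hw1s⟩ := walk_orient (hst _ hpC) (P s(α, β))
    obtain ⟨w2, hw2p, hw2s⟩ := walk_orient (Sym2.eq_swap.trans (hst _ hqC)) (P s(α', β'))
    have hadj : (cube n).Adj β β' := by
      show hammingDist β β' = 1
      rw [hβ']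
      exact hammingDist_update β i
    have hmsup : ∀ x, x ∈ (w1.append (SimpleGraph.Walk.cons hadj w2)).support ↔
        (x ∈ (P s(α, β)).support ∨ x ∈ (P s(α', β')).support) := by
      intro x
      constructor
      · intro hx
        rcases (SimpleGraph.Walk.mem_support_append_iff _ _).1 hx with h | h
        · exact Or.inl ((hw1s x).1 h)
        · rw [SimpleGraph.Walk.support_cons, List.mem_cons] at h
          rcases h with rfl | h
          · exact Or.inl ((hw1s x).1 (SimpleGraph.Walk.end_mem_support w1))
          · exact Or.inr ((hw2s x).1 h)
      · intro hx
        apply (SimpleGraph.Walk.mem_support_append_iff _ _).2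
        rcases hx with h | h
        · exact Or.inl ((hw1s x).2 h)
        · refine Or.inr ?_
          rw [SimpleGraph.Walk.support_cons, List.mem_cons]
          exact Or.inr ((hw2s x).2 h)
    have hmpath : (w1.append (SimpleGraph.Walk.cons hadj w2)).IsPath := by
      rw [SimpleGraph.Walk.isPath_def, SimpleGraph.Walk.support_append,
        SimpleGraph.Walk.support_cons, List.tail_cons]
      refine List.Nodup.append ?_ ?_ ?_
      · exact (SimpleGraph.Walk.isPath_def _).1 (hw1p (hpath _ hpC))
      · exact (SimpleGraph.Walk.isPath_def _).1 (hw2p (hpath _ hqC))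
      · intro x h1 h2
        exact disj x ((hw1s x).1 h1) ((hw2s x).1 h2)
    have hDmem : ∀ r, r ∈ D ↔ (r ∈ C ∧ r ≠ s(α, β) ∧ r ≠ s(α', β')) ∨ r = s(α, α') := by
      intro r
      rw [hD]
      simp only [Finset.mem_union, Finset.mem_sdiff, Finset.mem_insert,
        Finset.mem_singleton, not_or, and_assoc]
    have hne_r : ∀ r ∈ C, r ≠ s(α, β) → r ≠ s(α', β') → r ≠ s(α, α') := by
      intro r hr h1 h2 h3
      apply h1
      refine (huniq α).unique ⟨hr, endp r hr α ?_⟩ ⟨hpC, endp _ hpC α ?_⟩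
      · rw [h3]; exact Sym2.mem_mk_left _ _
      · exact Sym2.mem_mk_left _ _
    refine ⟨fun r => (famUpd s t P (s(α, α')) α α' (w1.append (SimpleGraph.Walk.cons hadj w2)) r).1,
            fun r => (famUpd s t P (s(α, α')) α α' (w1.append (SimpleGraph.Walk.cons hadj w2)) r).2.1,
            fun r => (famUpd s t P (s(α, α')) α α' (w1.append (SimpleGraph.Walk.cons hadj w2)) r).2.2,
            ?_, ?_, ?_⟩
    · intro r hr
      beta_reduce
      by_cases h : r = s(α, α')
      · subst h
        rw [famUpd_pos s t P _ α α' _ rfl]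
      · rcases (hDmem r).1 hr with ⟨hrC, _, _⟩ | h'
        · rw [famUpd_neg s t P _ α α' _ h]
          exact hst r hrC
        · exact absurd h' h
    · intro r hr
      beta_reduce
      by_cases h : r = s(α, α')
      · rw [famUpd_pos s t P _ α α' _ h]
        exact hmpath
      · rcases (hDmem r).1 hr with ⟨hrC, _, _⟩ | h'
        · rw [famUpd_neg s t P _ α α' _ h]
          exact hpath r hrC
        · exact absurd h' h
    · intro v
      simp only []
      obtain ⟨r, ⟨hrC, hrv⟩, hru⟩ := huniq v
      by_cases hr : r = s(α, β) ∨ r = s(α', β')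
      · refine ⟨s(α, α'), ⟨(hDmem _).2 (Or.inr rfl), ?_⟩, ?_⟩
        · rw [famUpd_pos s t P _ α α' _ rfl]
          refine (hmsup v).2 ?_
          rcases hr with rfl | rfl
          · exact Or.inl hrv
          · exact Or.inr hrv
        · rintro r'' ⟨hr''D, hr''v⟩
          by_cases h'' : r'' = s(α, α')
          · exact h''
          · rw [famUpd_neg s t P _ α α' _ h''] at hr''v
            rcases (hDmem r'').1 hr''D with ⟨hC'', hne1, hne2⟩ | he
            · exfalso
              have heq := hru r'' ⟨hC'', hr''v⟩
              rcases hr with rfl | rfl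
              · exact hne1 heq
              · exact hne2 heq
            · exact absurd he h''
      · push_neg at hr
        obtain ⟨hne1, hne2⟩ := hr
        have hrne : r ≠ s(α, α') := hne_r r hrC hne1 hne2
        refine ⟨r, ⟨(hDmem r).2 (Or.inl ⟨hrC, hne1, hne2⟩), ?_⟩, ?_⟩
        · rw [famUpd_neg s t P _ α α' _ hrne]
          exact hrv
        · rintro r'' ⟨hr''D, hr''v⟩
          by_cases h'' : r'' = s(α, α')
          · subst h''
            rw [famUpd_pos s t P _ α α' _ rfl] at hr''v
            have hv : v ∈ (w1.append (SimpleGraph.Walk.cons hadj w2)).support := hr''v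
            rcases (hmsup v).1 hv with h | h
            · exact absurd (hru _ ⟨hpC, h⟩).symm hne1
            · exact absurd (hru _ ⟨hqC, h⟩).symm hne2
          · rcases (hDmem r'').1 hr''D with ⟨hC'', _, _⟩ | he
            · rw [famUpd_neg s t P _ α α' _ h''] at hr''v
              exact hru r'' ⟨hC'', hr''v⟩
            · exact absurd he h''

lemma lift_family {m : ℕ} (i : Fin (m + 1)) (B : Finset (Sym2 (Vtx (m + 1))))
    (hconst : ∀ p ∈ B, ∀ u ∈ p, ∀ v ∈ p, u i = v i)
    (s t : Bool → Sym2 (Vtx m) → Vtx m)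
    (P : ∀ b q, (cube m).Walk (s b q) (t b q))
    (h1 : ∀ b, ∀ q ∈ rhoPairs i b B, q = s(s b q, t b q))
    (h2 : ∀ b, ∀ q ∈ rhoPairs i b B, (P b q).IsPath)
    (h3 : ∀ b w, ∃! q, q ∈ rhoPairs i b B ∧ w ∈ (P b q).support) :
    Connectable B := by
  have hkmem : ∀ p ∈ B, ∀ u ∈ p, u i = (Quot.out p).1 i :=
    fun p hp u hu => hconst p hp u hu _ (Sym2.out_fst_mem p)
  have hd : ∀ p ∈ B, Sym2.map (Fin.removeNth i) p ∈ rhoPairs i ((Quot.out p).1 i) B := by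
    intro p hp
    exact Finset.mem_image_of_mem _ (Finset.mem_filter.2 ⟨hp, hkmem p hp⟩)
  have hreco : ∀ p ∈ B,
      Sym2.map (insFun i ((Quot.out p).1 i)) (Sym2.map (Fin.removeNth i) p) = p := by
    intro p hp
    induction p using Sym2.ind with
    | _ x y =>
      have hx := hkmem _ hp x (Sym2.mem_mk_left x y)
      have hy := hkmem _ hp y (Sym2.mem_mk_right x y)
      have e1 : insFun i ((Quot.out s(x, y)).1 i) (Fin.removeNth i x) = x := by
        show i.insertNth ((Quot.out s(x, y)).1 i) (Fin.removeNth i x) = x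
        rw [← hx]; exact Fin.insertNth_self_removeNth i x
      have e2 : insFun i ((Quot.out s(x, y)).1 i) (Fin.removeNth i y) = y := by
        show i.insertNth ((Quot.out s(x, y)).1 i) (Fin.removeNth i y) = y
        rw [← hy]; exact Fin.insertNth_self_removeNth i y
      rw [Sym2.map_pair_eq, Sym2.map_pair_eq, e1, e2]
  refine ⟨fun p => insHom i ((Quot.out p).1 i)
            (s ((Quot.out p).1 i) (Sym2.map (Fin.removeNth i) p)),
          fun p => insHom i ((Quot.out p).1 i)
            (t ((Quot.out p).1 i) (Sym2.map (Fin.removeNth i) p)),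
          fun p => SimpleGraph.Walk.map (insHom i ((Quot.out p).1 i))
            (P ((Quot.out p).1 i) (Sym2.map (Fin.removeNth i) p)), ?_, ?_, ?_⟩
  · intro p hp
    have h1' := h1 _ _ (hd p hp)
    have hc := congrArg (Sym2.map (insFun i ((Quot.out p).1 i))) h1'
    rw [Sym2.map_pair_eq, hreco p hp] at hc
    exact hc
  · intro p hp
    exact SimpleGraph.Walk.map_isPath_of_injective (insHom_injective i _) (h2 _ _ (hd p hp))
  · intro v
    obtain ⟨q, ⟨hq, hwq⟩, huq⟩ := h3 (v i) (Fin.removeNth i v)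
    obtain ⟨p, hpf, hpq⟩ := Finset.mem_image.1 hq
    obtain ⟨hpB, hcol⟩ := Finset.mem_filter.1 hpf
    have hkp : (Quot.out p).1 i = v i := hcol _ (Sym2.out_fst_mem p)
    refine ⟨p, ⟨hpB, ?_⟩, ?_⟩
    · rw [SimpleGraph.Walk.support_map]
      refine List.mem_map.2 ⟨Fin.removeNth i v, ?_, ?_⟩
      · rw [hkp, hpq]
        exact hwq
      · show i.insertNth ((Quot.out p).1 i) (Fin.removeNth i v) = v
        rw [hkp]
        exact Fin.insertNth_self_removeNth i v
    · rintro p' ⟨hp'B, hv'⟩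
      rw [SimpleGraph.Walk.support_map] at hv'
      obtain ⟨w', hw', hww⟩ := List.mem_map.1 hv'
      have hb' : (Quot.out p').1 i = v i := by
        rw [← hww]
        exact (insHom_apply_same i _ w').symm
      have hw'' : w' = Fin.removeNth i v := by
        rw [← hww]
        exact (removeNth_insHom i _ w').symm
      have hmem' : Sym2.map (Fin.removeNth i) p' ∈ rhoPairs i (v i) B := by
        have h := hd p' hp'B
        rwa [hb'] at h
      have hsup' : Fin.removeNth i v ∈
          (P (v i) (Sym2.map (Fin.removeNth i) p')).support := by
        rw [← hw'', ← hb']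
        exact hw'
      have hq' : Sym2.map (Fin.removeNth i) p' = q := huq _ ⟨hmem', hsup'⟩
      calc p' = Sym2.map (insFun i ((Quot.out p').1 i)) (Sym2.map (Fin.removeNth i) p') :=
            (hreco p' hp'B).symm
        _ = p := by rw [hq', hb', ← hpq, ← hkp, hreco p hpB]

/-- For `n = m + 1 > 1`: if `B` is an `i`-completion of a
pair-set `A` (i.e. `B ⇒* A` and every pair of `B` has constant `i`-th
coordinate) and both `ρ_{i=0}(B)` and `ρ_{i=1}(B)` are connectable in
`Q_{n-1}`, then `A` is connectable. -/
theorem stmt12 (m : ℕ) (hm : 1 ≤ m)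
    (A B : Finset (Sym2 (Vtx (m + 1)))) (i : Fin (m + 1))
    (hA : IsPairSet A) (hB : IsPairSet B)
    (hstep : Relation.ReflTransGen StepRel B A)
    (hconst : ∀ p ∈ B, ∀ u ∈ p, ∀ v ∈ p, u i = v i)
    (h0 : Connectable (rhoPairs i false B))
    (h1 : Connectable (rhoPairs i true B)) :
    Connectable A := by
  have hBconn : Connectable B := by
    obtain ⟨s0, t0, P0, h01, h02, h03⟩ := h0
    obtain ⟨s1, t1, P1, h11, h12, h13⟩ := h1
    refine lift_family i B hconst (pick s0 s1) (pick t0 t1) (pick P0 P1) ?_ ?_ ?_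
    · intro b; cases b
      · exact h01
      · exact h11
    · intro b; cases b
      · exact h02
      · exact h12
    · intro b; cases b
      · exact h03
      · exact h13
  clear h0 h1 hconst hA hB
  induction hstep with
  | refl => exact hBconn
  | tail _ hstep ih => exact connectable_step hstep ih
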